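/- Let p > q > 0 be coprime integers with negative continued fraction expansion p/q = [a_1,...,a_l] (where each a_i ≥ 2 and [a_1,...,a_l] = a_1 - 1/(a_2 - 1/(... - 1/a_l))). Then length(p/q) + length(p/(p-q)) = 1 + Σ_{i=1}^{l} (a_i - 1), where length denotes the number of terms in the respective negative continued fraction expansion with all coefficients ≥ 2. -/

import Mathlib

def ncfEval : List ℤ → ℚ
  | [] => 0
  | [a] => (a : ℚ)
  | a :: rest => (a : ℚ) - 1 / ncfEval rest

def IsNCF (r : ℚ) (L : List ℤ) : Prop :=
  L ≠ [] ∧ (∀ a ∈ L, 2 ≤ a) ∧ ncfEval L = r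

lemma ncfEval_cons (a b : ℤ) (rest : List ℤ) :
    ncfEval (a :: b :: rest) = (a : ℚ) - 1 / ncfEval (b :: rest) := rfl

lemma one_lt_ncfEval : ∀ L : List ℤ, L ≠ [] → (∀ a ∈ L, 2 ≤ a) → 1 < ncfEval L
  | [], h, _ => absurd rfl h
  | [a], _, h2 => by
      have : (2:ℤ) ≤ a := h2 a (by simp)
      simp only [ncfEval]
      exact_mod_cast lt_of_lt_of_le one_lt_two (by exact_mod_cast this)
  | a :: b :: rest, _, h2 => by
      have he : 1 < ncfEval (b :: rest) :=
        one_lt_ncfEval (b :: rest) (by simp) (fun x hx => h2 x (by simp [hx]))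
      have ha : (2:ℤ) ≤ a := h2 a (by simp)
      rw [ncfEval_cons]
      have h1 : 1 / ncfEval (b :: rest) < 1 := by
        rw [div_lt_one (by linarith)]; linarith
      have : (2:ℚ) ≤ (a:ℚ) := by exact_mod_cast ha
      linarith

lemma ncf_unique : ∀ A B : List ℤ, A ≠ [] → B ≠ [] →
    (∀ a ∈ A, 2 ≤ a) → (∀ a ∈ B, 2 ≤ a) → ncfEval A = ncfEval B → A = B
  | [], _, hA, _, _, _, _ => absurd rfl hA
  | _, [], _, hB, _, _, _ => absurd rfl hB
  | [a], [b], _, _, _, _, h => by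
      simp only [ncfEval] at h
      have : a = b := by exact_mod_cast h
      rw [this]
  | [a], b :: c :: B', _, _, hA2, hB2, h => by
      exfalso
      have he : 1 < ncfEval (c :: B') :=
        one_lt_ncfEval _ (by simp) (fun x hx => hB2 x (by simp [hx]))
      rw [ncfEval_cons] at h
      simp only [ncfEval] at h
      have h1 : 0 < 1 / ncfEval (c :: B') := by positivity
      have h2 : 1 / ncfEval (c :: B') < 1 := by
        rw [div_lt_one (by linarith)]; linarith
      have hblt : (a:ℚ) < b := by linarith
      have hbgt : (b:ℚ) - 1 < a := by linarith
      have : a < b := by exact_mod_cast hblt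
      have : (a:ℚ) + 1 ≤ (b:ℚ) := by exact_mod_cast Int.lt_iff_add_one_le.mp this
      linarith
  | a :: c :: A', [b], _, _, hA2, hB2, h => by
      exfalso
      have he : 1 < ncfEval (c :: A') :=
        one_lt_ncfEval _ (by simp) (fun x hx => hA2 x (by simp [hx]))
      rw [ncfEval_cons] at h
      simp only [ncfEval] at h
      have h1 : 0 < 1 / ncfEval (c :: A') := by positivity
      have h2 : 1 / ncfEval (c :: A') < 1 := by
        rw [div_lt_one (by linarith)]; linarith
      have hblt : (b:ℚ) < a := by linarith
      have hbgt : (a:ℚ) - 1 < b := by linarith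
      have : b < a := by exact_mod_cast hblt
      have : (b:ℚ) + 1 ≤ (a:ℚ) := by exact_mod_cast Int.lt_iff_add_one_le.mp this
      linarith
  | a :: c :: A', b :: d :: B', _, _, hA2, hB2, h => by
      have heA : 1 < ncfEval (c :: A') :=
        one_lt_ncfEval _ (by simp) (fun x hx => hA2 x (by simp [hx]))
      have heB : 1 < ncfEval (d :: B') :=
        one_lt_ncfEval _ (by simp) (fun x hx => hB2 x (by simp [hx]))
      rw [ncfEval_cons, ncfEval_cons] at h
      have h1A : 0 < 1 / ncfEval (c :: A') := by positivity
      have h2A : 1 / ncfEval (c :: A') < 1 := by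
        rw [div_lt_one (by linarith)]; linarith
      have h1B : 0 < 1 / ncfEval (d :: B') := by positivity
      have h2B : 1 / ncfEval (d :: B') < 1 := by
        rw [div_lt_one (by linarith)]; linarith
      have hab : a = b := by
        have l1 : (a:ℚ) < b + 1 := by linarith
        have l2 : (b:ℚ) < a + 1 := by linarith
        have l1' : a < b + 1 := by exact_mod_cast l1
        have l2' : b < a + 1 := by exact_mod_cast l2
        omega
      subst hab
      have heq : ncfEval (c :: A') = ncfEval (d :: B') := by
        have : 1 / ncfEval (c :: A') = 1 / ncfEval (d :: B') := by linarith
        field_simp at this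
        linarith
      have := ncf_unique (c :: A') (d :: B') (by simp) (by simp)
        (fun x hx => hA2 x (by simp [hx])) (fun x hx => hB2 x (by simp [hx])) heq
      rw [this]

lemma ncfEval_inc (a : ℤ) (rest : List ℤ) :
    ncfEval ((a + 1) :: rest) = 1 + ncfEval (a :: rest) := by
  cases rest with
  | nil => simp [ncfEval]; ring
  | cons b r => rw [ncfEval_cons, ncfEval_cons]; push_cast; ring

lemma ncfEval_replicate : ∀ n : ℕ, ncfEval (List.replicate (n + 1) 2) = ((n:ℚ) + 2) / ((n:ℚ) + 1)
  | 0 => by norm_num [ncfEval]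
  | n + 1 => by
      have ih := ncfEval_replicate n
      have hrep : List.replicate (n + 2) (2:ℤ) = 2 :: List.replicate (n + 1) 2 := rfl
      have hne : List.replicate (n+1) (2:ℤ) ≠ [] := by simp
      obtain ⟨c, r, hcr⟩ : ∃ c r, List.replicate (n+1) (2:ℤ) = c :: r := by
        cases h : List.replicate (n+1) (2:ℤ) with
        | nil => exact absurd h hne
        | cons c r => exact ⟨c, r, rfl⟩
      rw [hrep, hcr, ncfEval_cons, ← hcr, ih]
      have h1 : ((n:ℚ) + 1) ≠ 0 := by positivity
      have h2 : ((n:ℚ) + 2) ≠ 0 := by positivity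
      push_cast
      field_simp
      ring

lemma ncf_exists : ∀ p : ℕ, ∀ q : ℕ, 0 < q → q < p → Nat.Coprime p q →
    ∃ A B : List ℤ, IsNCF ((p:ℚ)/q) A ∧ IsNCF ((p:ℚ)/((p:ℚ)-(q:ℚ))) B ∧
      ((A.length : ℤ) + B.length = 1 + (A.map (fun a => a - 1)).sum) ∧
      ((A.length : ℤ) + B.length = 1 + (B.map (fun a => a - 1)).sum) := by
  intro p
  induction p using Nat.strong_induction_on with
  | _ p IH =>
    intro q hq hqp hcop
    rcases eq_or_lt_of_le (show 1 ≤ q from hq) with h1 | h2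
    · -- q = 1
      have hq1 : q = 1 := h1.symm
      subst hq1
      refine ⟨[(p:ℤ)], List.replicate (p - 1) 2, ?_, ?_, ?_, ?_⟩
      · refine ⟨by simp, ?_, ?_⟩
        · intro a ha; simp at ha; subst ha; exact_mod_cast hqp
        · simp [ncfEval]
      · have hp2 : 2 ≤ p := hqp
        obtain ⟨n, hn⟩ : ∃ n, p - 1 = n + 1 := ⟨p - 2, by omega⟩
        refine ⟨by simp; omega, ?_, ?_⟩
        · intro a ha; simp at ha; omega
        · rw [hn, ncfEval_replicate]
          have hnp : (n : ℚ) = (p : ℚ) - 2 := by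
            have : n = p - 2 := by omega
            subst this; push_cast [show 2 ≤ p from hp2]; ring
          rw [hnp]; ring_nf
      · have h1p : 1 ≤ p := by omega
        simp only [List.length_cons, List.length_nil, List.length_replicate,
          List.map_cons, List.map_nil, List.sum_cons, List.sum_nil]
        push_cast [h1p]
        ring
      · have h1p : 1 ≤ p := by omega
        have hsum : ((List.replicate (p - 1) (2:ℤ)).map (fun a => a - 1)).sum = ((p:ℤ) - 1) := by
          simp [List.sum_replicate]
          push_cast [h1p]
          ring
        simp only [List.length_cons, List.length_nil, List.length_replicate,
          List.map_cons, List.map_nil, List.sum_cons, List.sum_nil, hsum]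
        push_cast [h1p]
        ring
    · -- q ≥ 2
      have hq2 : 2 ≤ q := h2
      have hne2q : p ≠ 2 * q := by
        intro h
        have hdvd : q ∣ Nat.gcd p q := Nat.dvd_gcd ⟨2, by omega⟩ dvd_rfl
        rw [Nat.Coprime] at hcop
        rw [hcop] at hdvd
        have := Nat.le_of_dvd one_pos hdvd
        omega
      rcases lt_or_gt_of_ne hne2q with hlt | hgt
      · -- p < 2q : use IH at (q, p - q)
        have hpq : 0 < p - q := by omega
        have hpqq : p - q < q := by omega
        have hcop' : Nat.Coprime q (p - q) := by
          exact ((Nat.coprime_sub_self_left hqp.le).mpr hcop).symm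
        obtain ⟨A'', B'', hA'', hB'', e1, e2⟩ := IH q hqp (p - q) hpq hpqq hcop'
        obtain ⟨hA''ne, hA''2, hA''e⟩ := hA''
        obtain ⟨hB''ne, hB''2, hB''e⟩ := hB''
        obtain ⟨a, rest, har⟩ : ∃ a rest, A'' = a :: rest := by
          cases hA : A'' with
          | nil => exact absurd hA hA''ne
          | cons a r => exact ⟨a, r, rfl⟩
        refine ⟨2 :: B'', (a + 1) :: rest, ?_, ?_, ?_, ?_⟩
        · obtain ⟨b, rest', hbr⟩ : ∃ b rest', B'' = b :: rest' := by
            cases hB : B'' with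
            | nil => exact absurd hB hB''ne
            | cons b r => exact ⟨b, r, rfl⟩
          refine ⟨by simp, ?_, ?_⟩
          · intro x hx; simp at hx
            rcases hx with h | h
            · omega
            · exact hB''2 x h
          · rw [hbr, ncfEval_cons, ← hbr, hB''e]
            have hcast : ((p - q : ℕ) : ℚ) = (p:ℚ) - q := by
              push_cast [hqp.le]; ring
            rw [hcast]
            have hq0 : (q:ℚ) ≠ 0 := by positivity
            have hd : (q:ℚ) - ((p:ℚ) - q) ≠ 0 := by
              have : (p:ℚ) < 2 * q := by exact_mod_cast hlt
              intro h; nlinarith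
            have hqpos : (0:ℚ) < q := by positivity
            field_simp
            ring
        · refine ⟨by simp, ?_, ?_⟩
          · intro x hx; rw [har] at hA''2; simp at hx
            rcases hx with h | h
            · have := hA''2 a (by simp); omega
            · exact hA''2 x (by simp [h])
          · rw [ncfEval_inc, ← har, hA''e]
            have hcast : ((p - q : ℕ) : ℚ) = (p:ℚ) - q := by
              push_cast [hqp.le]; ring
            rw [hcast]
            have hd : (p:ℚ) - q ≠ 0 := by
              have : (q:ℚ) < p := by exact_mod_cast hqp
              intro h; nlinarith
            field_simp
            ring
        · rw [har] at e1 e2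
          simp only [List.length_cons, List.map_cons, List.sum_cons] at *
          push_cast at *
          linarith
        · rw [har] at e1 e2
          simp only [List.length_cons, List.map_cons, List.sum_cons] at *
          push_cast at *
          linarith
      · -- p > 2q : use IH at (p - q, q)
        have hpq : p - q < p := by omega
        have hqpq : q < p - q := by omega
        have hcop' : Nat.Coprime (p - q) q :=
          (Nat.coprime_sub_self_left hqp.le).mpr hcop
        obtain ⟨A', B', hA', hB', e1, e2⟩ := IH (p - q) hpq q hq hqpq hcop'
        obtain ⟨hA'ne, hA'2, hA'e⟩ := hA'
        obtain ⟨hB'ne, hB'2, hB'e⟩ := hB'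
        obtain ⟨a, rest, har⟩ : ∃ a rest, A' = a :: rest := by
          cases hA : A' with
          | nil => exact absurd hA hA'ne
          | cons a r => exact ⟨a, r, rfl⟩
        refine ⟨(a + 1) :: rest, 2 :: B', ?_, ?_, ?_, ?_⟩
        · refine ⟨by simp, ?_, ?_⟩
          · intro x hx; rw [har] at hA'2; simp at hx
            rcases hx with h | h
            · have := hA'2 a (by simp); omega
            · exact hA'2 x (by simp [h])
          · rw [ncfEval_inc, ← har, hA'e]
            have hcast : ((p - q : ℕ) : ℚ) = (p:ℚ) - q := by
              push_cast [hqp.le]; ring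
            rw [hcast]
            have hq0 : (q:ℚ) ≠ 0 := by positivity
            field_simp
            ring
        · obtain ⟨b, rest', hbr⟩ : ∃ b rest', B' = b :: rest' := by
            cases hB : B' with
            | nil => exact absurd hB hB'ne
            | cons b r => exact ⟨b, r, rfl⟩
          refine ⟨by simp, ?_, ?_⟩
          · intro x hx; simp at hx
            rcases hx with h | h
            · omega
            · exact hB'2 x h
          · rw [hbr, ncfEval_cons, ← hbr, hB'e]
            have hcast : ((p - q : ℕ) : ℚ) = (p:ℚ) - q := by
              push_cast [hqp.le]; ring
            rw [hcast]
            have hqQ : (q:ℚ) < p := by exact_mod_cast hqp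
            have h2qQ : 2 * (q:ℚ) < p := by exact_mod_cast hgt
            have hd1 : (p:ℚ) - q ≠ 0 := by intro h; nlinarith
            have hd2 : (p:ℚ) - q - q ≠ 0 := by intro h; nlinarith
            field_simp
            ring
        · rw [har] at e1 e2
          simp only [List.length_cons, List.map_cons, List.sum_cons] at *
          push_cast at *
          linarith
        · rw [har] at e1 e2
          simp only [List.length_cons, List.map_cons, List.sum_cons] at *
          push_cast at *
          linarith

theorem stmt0 (p q : ℕ) (hq : 0 < q) (hqp : q < p) (hcop : Nat.Coprime p q)
    (A B : List ℤ) (hA : IsNCF ((p : ℚ) / q) A) (hB : IsNCF ((p : ℚ) / (p - q)) B) :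
    (A.length : ℤ) + B.length = 1 + (A.map (fun a => a - 1)).sum := by
  obtain ⟨A₀, B₀, hA₀, hB₀, e1, e2⟩ := ncf_exists p q hq hqp hcop
  have hAeq : A = A₀ :=
    ncf_unique A A₀ hA.1 hA₀.1 hA.2.1 hA₀.2.1 (hA.2.2.trans hA₀.2.2.symm)
  have hBeq : B = B₀ :=
    ncf_unique B B₀ hB.1 hB₀.1 hB.2.1 hB₀.2.1 (hB.2.2.trans hB₀.2.2.symm)
  rw [hAeq, hBeq]
  exact e1
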